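/- Let A be a real m×n matrix, x, p ∈ ℝⁿ with p ≠ 0 and ⟪x - p, p⟫ = 0, and set b = A·x, u = p/‖p‖, d = (A·p)/‖p‖², and Ā = A·(I - u·uᵀ) (a rank-one modification of A whose rows are orthogonal to p). Assume Ā·Āᵀ is invertible and define v = (Ā·Āᵀ)⁻¹·(b - ⟪x, p⟫·d) ∈ ℝᵐ and q = p + Āᵀ·v. Then A·(x - q) = 0 and ⟪x - q, p⟫ = 0; consequently q is the orthogonal projection of x onto the subspace of ℝⁿ spanned by p together with the rows of A. -/

import Mathlib

open scoped RealInnerProductSpace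
open Matrix

lemma inner_eq_dot {k : ℕ} (a c : EuclideanSpace ℝ (Fin k)) : ⟪a, c⟫ = a ⬝ᵥ c := by
  simp [PiLp.inner_apply, dotProduct, RCLike.inner_apply, conj_trivial]
  exact Finset.sum_congr rfl fun _ _ => mul_comm _ _

lemma vecMulVec_mulVec' {k : ℕ} (a c w : Fin k → ℝ) :
    (vecMulVec a c).mulVec w = (c ⬝ᵥ w) • a := by
  funext j
  simp [vecMulVec, mulVec, dotProduct, Finset.mul_sum, mul_assoc]
  rw [Finset.sum_mul]
  congr 1; funext i; ring

theorem ap_rank_one_step_is_projection {m n : ℕ}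
    (A : Matrix (Fin m) (Fin n) ℝ)
    (x p : EuclideanSpace ℝ (Fin n)) (hp : p ≠ 0)
    (horth : ⟪x - p, p⟫ = 0)
    (b : EuclideanSpace ℝ (Fin m)) (hb : b = A.mulVec x)
    (u : EuclideanSpace ℝ (Fin n)) (hu : u = (1 / ‖p‖) • p)
    (d : EuclideanSpace ℝ (Fin m)) (hd : d = (1 / ‖p‖ ^ 2) • (WithLp.toLp 2 (A.mulVec p) : EuclideanSpace ℝ (Fin m)))
    (Abar : Matrix (Fin m) (Fin n) ℝ) (hAbar : Abar = A * (1 - vecMulVec u u))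
    (hinv : IsUnit (Abar * Abarᵀ))
    (v : EuclideanSpace ℝ (Fin m)) (hv : v = (Abar * Abarᵀ)⁻¹.mulVec (b - ⟪x, p⟫ • d))
    (Atv : EuclideanSpace ℝ (Fin n)) (hAtv : Atv = Abarᵀ.mulVec v)
    (q : EuclideanSpace ℝ (Fin n)) (hq : q = p + Atv) :
    A.mulVec (x - q) = 0 ∧ ⟪x - q, p⟫ = 0 ∧
      (q ∈ Submodule.span ℝ {p} ⊔
          Submodule.span ℝ (Set.range fun i : Fin m => (WithLp.toLp 2 (A i) : EuclideanSpace ℝ (Fin n))) ∧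
        ∀ w ∈ Submodule.span ℝ {p} ⊔
            Submodule.span ℝ (Set.range fun i : Fin m => (WithLp.toLp 2 (A i) : EuclideanSpace ℝ (Fin n))),
          ⟪x - q, w⟫ = 0) := by
  have hpn : ‖p‖ ≠ 0 := norm_ne_zero_iff.mpr hp
  have hpp : (fun j => p j) ⬝ᵥ (fun j => p j) = ‖p‖ ^ 2 := by
    rw [← inner_eq_dot]; exact real_inner_self_eq_norm_sq p
  have hxp : ⟪x, p⟫ = ‖p‖ ^ 2 := by
    rw [inner_sub_left, sub_eq_zero] at horth
    rw [horth, real_inner_self_eq_norm_sq]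
  have huj : ∀ j, u j = (1 / ‖p‖) * p j := by
    intro j; rw [hu]; rfl
  -- the rank-one projector
  have hsub : ∀ w : Fin n → ℝ,
      (1 - vecMulVec u u).mulVec w = w - ((fun j => u j) ⬝ᵥ w) • (fun j => u j) := by
    intro w
    rw [Matrix.sub_mulVec, Matrix.one_mulVec]
    congr 1
    exact vecMulVec_mulVec' _ _ _
  have hud : (fun j => u j) ⬝ᵥ (fun j => p j) = ‖p‖ := by
    simp only [dotProduct, huj]
    rw [show (∑ i, 1 / ‖p‖ * p i * p i) = (1 / ‖p‖) * ∑ i, p i * p i by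
      rw [Finset.mul_sum]; congr 1; funext i; ring]
    have : (∑ i, p i * p i) = ‖p‖ ^ 2 := hpp
    rw [this]; field_simp
  have hupvec : ‖p‖ • (fun j => u j) = (fun j => p j) := by
    funext j
    simp only [Pi.smul_apply, smul_eq_mul, huj j]
    field_simp
  have hAp0 : Abar.mulVec p = 0 := by
    rw [hAbar, ← Matrix.mulVec_mulVec, hsub, hud, hupvec, sub_self, Matrix.mulVec_zero]
  have hAtvp : (fun j => Atv j) ⬝ᵥ (fun j => p j) = 0 := by
    rw [hAtv, Matrix.mulVec_transpose, ← Matrix.dotProduct_mulVec, hAp0, dotProduct_zero]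
  have hAtvp' : ⟪Atv, p⟫ = 0 := by rw [inner_eq_dot]; exact hAtvp
  -- second conclusion
  have part2 : ⟪x - q, p⟫ = 0 := by
    have : x - q = (x - p) - Atv := by rw [hq]; abel
    rw [this, inner_sub_left, horth, hAtvp', sub_zero]
  -- first conclusion
  have huAtv : (fun j => u j) ⬝ᵥ (fun j => Atv j) = 0 := by
    simp only [dotProduct, huj]
    rw [show (∑ i, 1 / ‖p‖ * p i * Atv i) = (1 / ‖p‖) * ∑ i, Atv i * p i by
      rw [Finset.mul_sum]; congr 1; funext i; ring]
    have : (∑ i, Atv i * p i) = 0 := hAtvp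
    rw [this, mul_zero]
  have hM : (Abar * Abarᵀ) * (Abar * Abarᵀ)⁻¹ = 1 :=
    Matrix.mul_nonsing_inv _ ((Matrix.isUnit_iff_isUnit_det _).mp hinv)
  have hAbarAtv : Abar.mulVec Atv = A.mulVec x - A.mulVec p := by
    rw [hAtv, Matrix.mulVec_mulVec, hv, Matrix.mulVec_mulVec, hM, Matrix.one_mulVec,
      hb, hd, hxp]
    funext i
    show (A *ᵥ x) i - ‖p‖ ^ 2 * ((1 / ‖p‖ ^ 2) * (A *ᵥ p) i) = (A *ᵥ x) i - (A *ᵥ p) i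
    field_simp
  have hAAtv : A.mulVec Atv = Abar.mulVec Atv := by
    conv_rhs => rw [hAbar, ← Matrix.mulVec_mulVec, hsub, huAtv, zero_smul, sub_zero]
  have part1 : A.mulVec (x - q) = 0 := by
    rw [Matrix.mulVec_sub, hq, WithLp.ofLp_add, Matrix.mulVec_add, hAAtv, hAbarAtv]
    abel
  -- decomposition of Atv
  have hvT : (vecMulVec (u : Fin n → ℝ) u)ᵀ = vecMulVec (u : Fin n → ℝ) u := by
    ext i j; simp [vecMulVec, mul_comm]
  have hAtv_decomp : Atv =
      Aᵀ.mulVec v - ((fun j => u j) ⬝ᵥ (Aᵀ.mulVec v)) • (fun j => u j) := by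
    rw [hAtv, hAbar, Matrix.transpose_mul, Matrix.transpose_sub, Matrix.transpose_one,
      hvT, ← Matrix.mulVec_mulVec, hsub]
  set K := Submodule.span ℝ {p} ⊔
      Submodule.span ℝ (Set.range fun i : Fin m => (WithLp.toLp 2 (A i) : EuclideanSpace ℝ (Fin n))) with hK
  set r : EuclideanSpace ℝ (Fin n) := WithLp.toLp 2 (Aᵀ.mulVec v) with hr
  have hrowmem : r ∈ K := by
    have hsum : r =
        ∑ i, v i • (WithLp.toLp 2 (A i) : EuclideanSpace ℝ (Fin n)) := by
      ext j
      rw [hr]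
      simp [WithLp.ofLp_sum, Finset.sum_apply, mulVec, dotProduct, transpose_apply, mul_comm]
    rw [hsum]
    exact Submodule.sum_mem _ fun i _ => Submodule.mem_sup_right
      (Submodule.smul_mem _ _ (Submodule.subset_span ⟨i, rfl⟩))
  have humem : (u : EuclideanSpace ℝ (Fin n)) ∈ Submodule.span ℝ {p} := by
    rw [hu]
    exact Submodule.smul_mem _ _ (Submodule.mem_span_singleton_self p)
  have hqmem : q ∈ K := by
    have hq2 : q = (p - ((fun j => u j) ⬝ᵥ (Aᵀ.mulVec v)) • u) + r := by
      ext j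
      have h1 : q j = p j + Atv j := by rw [hq]; rfl
      have h2 : Atv j = (Aᵀ.mulVec v) j - ((fun j => u j) ⬝ᵥ (Aᵀ.mulVec v)) * u j := by
        rw [hAtv_decomp]; rfl
      show q j = (p j - ((fun j => u j) ⬝ᵥ (Aᵀ.mulVec v)) * u j) + (Aᵀ.mulVec v) j
      rw [h1, h2]; ring
    rw [hq2]
    exact Submodule.add_mem _
      (Submodule.mem_sup_left (Submodule.sub_mem _ (Submodule.mem_span_singleton_self p)
        (Submodule.smul_mem _ _ humem))) hrowmem
  refine ⟨part1, part2, hqmem, ?_⟩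
  intro w hw
  rw [hK, ← Submodule.span_union] at hw
  induction hw using Submodule.span_induction with
  | mem w hwmem =>
    rcases hwmem with h | ⟨i, rfl⟩
    · rw [Set.mem_singleton_iff.mp h]; exact part2
    · rw [inner_eq_dot, dotProduct_comm]
      simpa [Matrix.mulVec, dotProduct_sub] using congrFun part1 i
  | zero => exact inner_zero_right _
  | add w₁ w₂ _ _ h1 h2 => rw [inner_add_right, h1, h2, add_zero]
  | smul c w' _ h1 => rw [real_inner_smul_right, h1, mul_zero]
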